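/- Let E be a set of locally finite perimeter in R^n with (n−1)-Ahlfors regular perimeter measure with constant C_A up to scale r_0, let Q ∈ ∂E and 0 < r < r_0. If the average normal (ν_E)_{Q,r} over B(Q,r) ∩ ∂*E is nonzero, then the cylindrical excess at scale r/√2 in the direction (ν_E)_{Q,r}/|(ν_E)_{Q,r}| is bounded by a constant (depending only on n and C_A) times the mean square oscillation ⨍_{B(Q,r)∩∂*E} |ν_E − (ν_E)_{Q,r}|² dH^{n-1}, provided this mean square oscillation is less than 1. -/

import Mathlib

open MeasureTheory Metric Set Filter
open scoped ENNReal NNReal RealInnerProductSpace Topology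

noncomputable section

abbrev En (n : ℕ) : Type := EuclideanSpace ℝ (Fin n)

variable {n : ℕ}

/-- Divergence of a vector field on `ℝⁿ`. -/
def divg (T : En n → En n) (x : En n) : ℝ :=
  ∑ i, ⟪fderiv ℝ T x (EuclideanSpace.single i 1), EuclideanSpace.single i 1⟫

/-- A set has locally finite perimeter if, for every compact set `K`, the variation
over vector fields supported in `K` with sup-norm at most 1 is finite. -/
def HasLocFinPerimeter (E : Set (En n)) : Prop :=
  ∀ K : Set (En n), IsCompact K →
    BddAbove {v : ℝ | ∃ T : En n → En n, ContDiff ℝ 1 T ∧ tsupport T ⊆ K ∧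
      (∀ x, ‖T x‖ ≤ 1) ∧ v = ∫ x in E, divg T x}

/-- A set of locally finite perimeter bundled with its reduced boundary and
measure-theoretic outer unit normal. -/
structure FinPerimeterSet (n : ℕ) where
  carrier : Set (En n)
  locFin : HasLocFinPerimeter carrier
  redBdry : Set (En n)
  nuE : En n → En n
  redBdry_subset : redBdry ⊆ frontier carrier
  nuE_unit : ∀ x ∈ redBdry, ‖nuE x‖ = 1

/-- The cylinder with center `x`, radius and height `r`, and axial direction `ν`. -/
def cylinder (x : En n) (r : ℝ) (ν : En n) : Set (En n) :=
  {y | |⟪x - y, ν⟫| < r ∧ ‖x - y - ⟪x - y, ν⟫ • ν‖ < r}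

/-- The cylindrical excess of a set whose reduced boundary is `S` and whose
measure-theoretic outer unit normal is `nu`. -/
def excess (S : Set (En n)) (nu : En n → En n) (x : En n) (r : ℝ) (ν : En n) : ℝ :=
  (1 / r ^ (n - 1)) * ∫ y in cylinder x r ν ∩ S, ‖nu y - ν‖ ^ 2 / 2 ∂μH[(n : ℝ) - 1]

/-- The perimeter measure `|μ_E| = H^{n-1} ⌊ ∂*E`. -/
def perimMeasure (E : FinPerimeterSet n) : Measure (En n) :=
  (μH[(n : ℝ) - 1] : Measure (En n)).restrict E.redBdry

/-- The support of a measure. -/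
def measureSupport (μ : Measure (En n)) : Set (En n) :=
  {x | ∀ r : ℝ, 0 < r → 0 < μ (ball x r)}

/-- `(n-1)`-Ahlfors regularity, with constant `C`, up to scale `r₀`, of a measure `μ`
at points of the set `F`. -/
def AhlforsRegUpTo (μ : Measure (En n)) (F : Set (En n)) (C r₀ : ℝ) : Prop :=
  ∀ x ∈ F, ∀ s : ℝ, 0 < s → s < r₀ →
    ENNReal.ofReal (C⁻¹ * s ^ (n - 1)) ≤ μ (ball x s) ∧
    μ (ball x s) ≤ ENNReal.ofReal (C * s ^ (n - 1))

set_option maxHeartbeats 1000000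

/-- if the average normal `(ν_E)_{Q,r}` is nonzero and the mean square
oscillation of the normal on `B(Q,r) ∩ ∂*E` is `< 1`, then the cylindrical excess at
scale `r/√2` in the averaged direction is bounded by `C(n,C_A)` times that oscillation. -/
theorem excess_le_const_mul_osc (n : ℕ) (hn : 2 ≤ n) (C_A : ℝ) (hCA : 1 ≤ C_A) :
    ∃ C > (0:ℝ), ∀ (E : FinPerimeterSet n) (r₀ : ℝ), 0 < r₀ →
      AhlforsRegUpTo (perimMeasure E) (frontier E.carrier) C_A r₀ →
      frontier E.carrier = measureSupport (perimMeasure E) →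
      ∀ Q ∈ frontier E.carrier, ∀ r : ℝ, 0 < r → r < r₀ →
      ∀ νavg : En n, νavg = (⨍ z in ball Q r ∩ E.redBdry, E.nuE z ∂μH[(n : ℝ) - 1]) →
      ∀ ε : ℝ, ε = (⨍ y in ball Q r ∩ E.redBdry, ‖E.nuE y - νavg‖ ^ 2 ∂μH[(n : ℝ) - 1]) →
        νavg ≠ 0 → ε < 1 →
        excess E.redBdry E.nuE Q (r / Real.sqrt 2) (‖νavg‖⁻¹ • νavg) ≤ C * ε := by
  refine ⟨2 * Real.sqrt 2 ^ (n - 1) * C_A, by positivity, ?_⟩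
  intro E r₀ hr₀ hAhl hsupp Q hQ r hr hrr₀ νavg hνavg ε hε hν0 hε1
  set μ : Measure (En n) := μH[(n : ℝ) - 1] with hμdef
  clear_value μ
  set S := E.redBdry with hSdef
  set nu := E.nuE with hnudef
  set A := ball Q r ∩ S with hAdef
  -- finiteness of μ A from Ahlfors regularity
  have hAfin : μ A ≤ ENNReal.ofReal (C_A * r ^ (n - 1)) := by
    have h := (hAhl Q hQ r hr hrr₀).2
    rw [perimMeasure, Measure.restrict_apply measurableSet_ball, ← hμdef] at h
    exact h
  have hAne : μ A ≠ ⊤ :=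
    (lt_of_le_of_lt hAfin ENNReal.ofReal_lt_top).ne
  -- νavg ≠ 0 forces integrability and positive measure
  have hInt : Integrable nu (μ.restrict A) := by
    by_contra h
    exact hν0 (by rw [hνavg, setAverage_eq, integral_undef h, smul_zero])
  have hA0 : μ A ≠ 0 := by
    intro h
    exact hν0 (by
      rw [hνavg, setAverage_eq, Measure.restrict_eq_zero.mpr h, integral_zero_measure,
        smul_zero])
  have hAtR : 0 < (μ A).toReal := ENNReal.toReal_pos hA0 hAne
  haveI : IsFiniteMeasure (μ.restrict A) :=
    ⟨by rw [Measure.restrict_apply_univ]; exact lt_of_le_of_lt hAfin ENNReal.ofReal_lt_top⟩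
  -- a.e. unit norm of nu on A
  have hsm : AEStronglyMeasurable nu (μ.restrict A) := hInt.aestronglyMeasurable
  have hae1 : ∀ᵐ x ∂μ.restrict A, ‖nu x‖ = 1 := by
    have hmk := hsm.ae_eq_mk
    have h1 : ∀ᵐ x ∂μ.restrict A, ‖hsm.mk nu x‖ = 1 := by
      rw [ae_iff]
      have hms : MeasurableSet {x | ¬‖hsm.mk nu x‖ = 1} := by
        have hmeas : Measurable fun x => ‖hsm.mk nu x‖ :=
          hsm.stronglyMeasurable_mk.norm.measurable
        exact hmeas (measurableSet_singleton (1 : ℝ)).compl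
      rw [Measure.restrict_apply hms]
      refine le_antisymm ?_ (zero_le)
      have hnull : μ.restrict A {x | ¬nu x = hsm.mk nu x} = 0 := by
        rw [← ae_iff]; exact hmk
      calc μ ({x | ¬‖hsm.mk nu x‖ = 1} ∩ A)
          ≤ μ ({x | ¬nu x = hsm.mk nu x} ∩ A) := by
            refine measure_mono fun x hx => ?_
            refine ⟨fun hcontra => hx.1 ?_, hx.2⟩
            rw [← hcontra]
            exact E.nuE_unit x hx.2.2
        _ ≤ μ.restrict A {x | ¬nu x = hsm.mk nu x} := Measure.le_restrict_apply _ _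
        _ ≤ 0 := le_of_eq hnull
    filter_upwards [h1, hmk] with x hx hx2
    rw [hx2]; exact hx
  -- integrability of the squared oscillation
  have hhsm : AEStronglyMeasurable (fun y => ‖nu y - νavg‖ ^ 2) (μ.restrict A) :=
    (continuous_pow 2).comp_aestronglyMeasurable (hsm.sub aestronglyMeasurable_const).norm
  have hh : Integrable (fun y => ‖nu y - νavg‖ ^ 2) (μ.restrict A) := by
    refine Integrable.mono' (integrable_const ((1 + ‖νavg‖) ^ 2)) hhsm ?_
    filter_upwards [hae1] with x hx
    have hb : ‖nu x - νavg‖ ≤ 1 + ‖νavg‖ := by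
      calc ‖nu x - νavg‖ ≤ ‖nu x‖ + ‖νavg‖ := norm_sub_le _ _
        _ = 1 + ‖νavg‖ := by rw [hx]
    rw [Real.norm_eq_abs, abs_of_nonneg (by positivity)]
    exact pow_le_pow_left₀ (norm_nonneg _) hb 2
  -- the value of ε
  have hεint : ∫ y in A, ‖nu y - νavg‖ ^ 2 ∂μ = ε * (μ A).toReal := by
    rw [hε, setAverage_eq, smul_eq_mul, measureReal_def]
    field_simp
  have hεnn : 0 ≤ ε := by
    rw [hε, setAverage_eq, smul_eq_mul]
    exact mul_nonneg (by positivity) (integral_nonneg fun y => by positivity)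
  -- key bound: (1 - ‖νavg‖)^2 ≤ ε
  have hkey : (1 - ‖νavg‖) ^ 2 ≤ ε := by
    have hc : ∫ y in A, (1 - ‖νavg‖) ^ 2 ∂μ ≤ ∫ y in A, ‖nu y - νavg‖ ^ 2 ∂μ := by
      refine integral_mono_ae (integrable_const _) hh ?_
      filter_upwards [hae1] with x hx
      have h1 : |‖nu x‖ - ‖νavg‖| ≤ ‖nu x - νavg‖ := abs_norm_sub_norm_le _ _
      rw [hx] at h1
      calc (1 - ‖νavg‖) ^ 2 = |1 - ‖νavg‖| ^ 2 := (sq_abs _).symm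
        _ ≤ ‖nu x - νavg‖ ^ 2 := pow_le_pow_left₀ (abs_nonneg _) h1 2
    rw [setIntegral_const, smul_eq_mul, hεint] at hc
    have hc2 : (μ A).toReal * (1 - ‖νavg‖) ^ 2 ≤ (μ A).toReal * ε := by
      calc (μ A).toReal * (1 - ‖νavg‖) ^ 2 ≤ ε * (μ A).toReal := hc
        _ = (μ A).toReal * ε := mul_comm _ _
    exact (mul_le_mul_iff_right₀ hAtR).mp hc2
  -- direction vector facts
  set ν := ‖νavg‖⁻¹ • νavg with hνdef
  have ha : 0 < ‖νavg‖ := norm_pos_iff.mpr hν0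
  have hνn : ‖ν‖ = 1 := by
    rw [hνdef, norm_smul, norm_inv, norm_norm, inv_mul_cancel₀ ha.ne']
  have hνdist : ‖νavg - ν‖ ^ 2 ≤ ε := by
    have h2 : νavg - ν = (1 - ‖νavg‖⁻¹) • νavg := by rw [hνdef, sub_smul, one_smul]
    have h3 : (|1 - ‖νavg‖⁻¹| * ‖νavg‖) ^ 2 = (1 - ‖νavg‖) ^ 2 := by
      rw [mul_pow, sq_abs]
      have hane : ‖νavg‖ ≠ 0 := ha.ne'
      field_simp
      ring
    calc ‖νavg - ν‖ ^ 2 = (|1 - ‖νavg‖⁻¹| * ‖νavg‖) ^ 2 := by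
          rw [h2, norm_smul, Real.norm_eq_abs]
      _ = (1 - ‖νavg‖) ^ 2 := h3
      _ ≤ ε := hkey
  -- pointwise bound
  have hpt : ∀ y, ‖nu y - ν‖ ^ 2 ≤ 2 * ‖nu y - νavg‖ ^ 2 + 2 * ε := by
    intro y
    have h4 : ‖nu y - ν‖ ≤ ‖nu y - νavg‖ + ‖νavg - ν‖ := by
      rw [← sub_add_sub_cancel (nu y) νavg ν]
      exact norm_add_le _ _
    have h5 : ‖nu y - ν‖ ^ 2 ≤ (‖nu y - νavg‖ + ‖νavg - ν‖) ^ 2 :=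
      pow_le_pow_left₀ (norm_nonneg _) h4 2
    nlinarith [sq_nonneg (‖nu y - νavg‖ - ‖νavg - ν‖), hνdist]
  -- geometry: cylinder ⊆ ball
  set ρ := r / Real.sqrt 2 with hρdef
  have hs2 : (0 : ℝ) < Real.sqrt 2 := Real.sqrt_pos.mpr (by norm_num)
  have hρpos : 0 < ρ := div_pos hr hs2
  have hcyl : cylinder Q ρ ν ⊆ ball Q r := by
    intro y hy
    simp only [_root_.cylinder, Set.mem_setOf_eq] at hy
    obtain ⟨h1, h2⟩ := hy
    rw [mem_ball, dist_eq_norm, ← norm_sub_rev]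
    set t := ⟪Q - y, ν⟫ with htdef
    set w := Q - y - t • ν with hwdef
    have hwv : ⟪w, t • ν⟫ = 0 := by
      rw [real_inner_smul_right, hwdef, inner_sub_left, real_inner_smul_left,
        real_inner_self_eq_norm_sq, hνn]
      ring
    have hdecomp : Q - y = w + t • ν := by rw [hwdef]; abel
    have hQy : ‖Q - y‖ ^ 2 = ‖w‖ ^ 2 + t ^ 2 := by
      rw [hdecomp, norm_add_sq_real, hwv, norm_smul, Real.norm_eq_abs, mul_pow, sq_abs, hνn]
      ring
    have ht2 : t ^ 2 < ρ ^ 2 := by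
      rw [← sq_abs]
      exact pow_lt_pow_left₀ h1 (abs_nonneg t) two_ne_zero
    have hw2 : ‖w‖ ^ 2 < ρ ^ 2 := pow_lt_pow_left₀ h2 (norm_nonneg w) two_ne_zero
    have hρ2 : ρ ^ 2 = r ^ 2 / 2 := by
      rw [hρdef, div_pow, Real.sq_sqrt (by norm_num : (0 : ℝ) ≤ 2)]
    have hlt : ‖Q - y‖ ^ 2 < r ^ 2 := by rw [hQy]; linarith
    exact lt_of_pow_lt_pow_left₀ 2 hr.le hlt
  set K := cylinder Q ρ ν ∩ S with hKdef
  have hKA : K ⊆ A := fun y hy => ⟨hcyl hy.1, hy.2⟩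
  have hle : μ.restrict K ≤ μ.restrict A := Measure.restrict_mono hKA le_rfl
  haveI : IsFiniteMeasure (μ.restrict K) :=
    ⟨by
      rw [Measure.restrict_apply_univ]
      exact lt_of_le_of_lt (le_trans (measure_mono hKA) hAfin) ENNReal.ofReal_lt_top⟩
  have hsmK : AEStronglyMeasurable nu (μ.restrict K) := hsm.mono_measure hle
  have hhK : Integrable (fun y => ‖nu y - νavg‖ ^ 2) (μ.restrict K) := hh.mono_measure hle
  -- integrability of the excess integrand on K
  have hg : Integrable (fun y => ‖nu y - ν‖ ^ 2 / 2) (μ.restrict K) := by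
    have hsm2 : AEStronglyMeasurable (fun y => ‖nu y - ν‖ ^ 2 / 2) (μ.restrict K) :=
      (((continuous_pow 2).div_const 2).comp_aestronglyMeasurable
        (hsmK.sub aestronglyMeasurable_const).norm)
    refine Integrable.mono' (integrable_const ((1 + ‖ν‖) ^ 2)) hsm2 ?_
    have hae1K : ∀ᵐ x ∂μ.restrict K, ‖nu x‖ = 1 := hae1.filter_mono (ae_mono hle)
    filter_upwards [hae1K] with x hx
    have hb : ‖nu x - ν‖ ≤ 1 + ‖ν‖ := by
      calc ‖nu x - ν‖ ≤ ‖nu x‖ + ‖ν‖ := norm_sub_le _ _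
        _ = 1 + ‖ν‖ := by rw [hx]
    rw [Real.norm_eq_abs, abs_of_nonneg (by positivity)]
    calc ‖nu x - ν‖ ^ 2 / 2 ≤ ‖nu x - ν‖ ^ 2 := by nlinarith [sq_nonneg ‖nu x - ν‖]
      _ ≤ (1 + ‖ν‖) ^ 2 := pow_le_pow_left₀ (norm_nonneg _) hb 2
  -- main chain of inequalities
  have hI1 : ∫ y in K, ‖nu y - ν‖ ^ 2 / 2 ∂μ ≤
      ∫ y in K, (‖nu y - νavg‖ ^ 2 + ε) ∂μ := by
    refine integral_mono_ae hg (hhK.add (integrable_const ε)) ?_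
    refine Filter.Eventually.of_forall fun x => ?_
    have := hpt x
    simp only
    linarith
  have hI2 : ∫ y in K, (‖nu y - νavg‖ ^ 2 + ε) ∂μ =
      ∫ y in K, ‖nu y - νavg‖ ^ 2 ∂μ + ε * (μ K).toReal := by
    rw [integral_add hhK (integrable_const ε), setIntegral_const, smul_eq_mul, mul_comm, measureReal_def]
  have hI3 : ∫ y in K, ‖nu y - νavg‖ ^ 2 ∂μ ≤ ∫ y in A, ‖nu y - νavg‖ ^ 2 ∂μ :=
    setIntegral_mono_set hh (Filter.Eventually.of_forall fun y => by positivity)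
      (HasSubset.Subset.eventuallyLE hKA)
  have hKAR : (μ K).toReal ≤ (μ A).toReal :=
    ENNReal.toReal_mono hAne (measure_mono hKA)
  have hACA : (μ A).toReal ≤ C_A * r ^ (n - 1) :=
    ENNReal.toReal_le_of_le_ofReal (by positivity) hAfin
  have hItot : ∫ y in K, ‖nu y - ν‖ ^ 2 / 2 ∂μ ≤ 2 * ε * (C_A * r ^ (n - 1)) := by
    have e1 : ∫ y in K, ‖nu y - ν‖ ^ 2 / 2 ∂μ ≤ ε * (μ A).toReal + ε * (μ A).toReal := by
      have e2 : ε * (μ K).toReal ≤ ε * (μ A).toReal :=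
        mul_le_mul_of_nonneg_left hKAR hεnn
      calc ∫ y in K, ‖nu y - ν‖ ^ 2 / 2 ∂μ
          ≤ ∫ y in K, ‖nu y - νavg‖ ^ 2 ∂μ + ε * (μ K).toReal := by rw [← hI2]; exact hI1
        _ ≤ ∫ y in A, ‖nu y - νavg‖ ^ 2 ∂μ + ε * (μ A).toReal := add_le_add hI3 e2
        _ = ε * (μ A).toReal + ε * (μ A).toReal := by rw [hεint]
    have e3 : ε * (μ A).toReal ≤ ε * (C_A * r ^ (n - 1)) :=
      mul_le_mul_of_nonneg_left hACA hεnn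
    calc ∫ y in K, ‖nu y - ν‖ ^ 2 / 2 ∂μ ≤ ε * (μ A).toReal + ε * (μ A).toReal := e1
      _ ≤ ε * (C_A * r ^ (n - 1)) + ε * (C_A * r ^ (n - 1)) := add_le_add e3 e3
      _ = 2 * ε * (C_A * r ^ (n - 1)) := by ring
  -- conclusion
  have hρpow : 0 < ρ ^ (n - 1) := pow_pos hρpos _
  have hrρ : r ^ (n - 1) = Real.sqrt 2 ^ (n - 1) * ρ ^ (n - 1) := by
    rw [← mul_pow]
    congr 1
    rw [hρdef]
    field_simp
  have hexcess : excess S nu Q ρ ν = (1 / ρ ^ (n - 1)) * ∫ y in K, ‖nu y - ν‖ ^ 2 / 2 ∂μ := by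
    rw [excess, ← hμdef, ← hKdef]
  rw [hexcess]
  have hfinal : (1 / ρ ^ (n - 1)) * (2 * ε * (C_A * r ^ (n - 1))) =
      2 * Real.sqrt 2 ^ (n - 1) * C_A * ε := by
    rw [hrρ]
    field_simp
  calc (1 / ρ ^ (n - 1)) * ∫ y in K, ‖nu y - ν‖ ^ 2 / 2 ∂μ
      ≤ (1 / ρ ^ (n - 1)) * (2 * ε * (C_A * r ^ (n - 1))) :=
        mul_le_mul_of_nonneg_left hItot (by positivity)
    _ = 2 * Real.sqrt 2 ^ (n - 1) * C_A * ε := hfinal
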